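/- Let D be the trapezoid with vertices (0,0), (1,0), (0,1), (1,2), and set a = 11/18 - √3893/458, b = 1/2 + 11√3893/4122, c = 1 - 10√3893/2061, d = 11/18 + √3893/458, λ = 163/392. Then L(f) = λ·(3/2)·f(5/9,7/9) + (1-λ)·(3/8)·(f(a,0)+f(1,c)+f(0,b)+f(d,d+1)) equals ∫∫_D f dA for every polynomial f(x,y) of total degree ≤ 2. -/

import Mathlib

open MeasureTheory MvPolynomial Real

/-- The trapezoid with vertices (0,0), (1,0), (0,1), (1,2). -/
def Trap : Set (Fin 2 → ℝ) := {v | 0 ≤ v 0 ∧ v 0 ≤ 1 ∧ 0 ≤ v 1 ∧ v 1 ≤ v 0 + 1}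

lemma int_cubic (c0 c1 c2 c3 : ℝ) :
    ∫ x in (0:ℝ)..1, (c0 + c1*x + c2*x^2 + c3*x^3) = c0 + c1/2 + c2/3 + c3/4 := by
  have h : ∀ x ∈ Set.uIcc (0:ℝ) 1,
      HasDerivAt (fun x : ℝ => c0*x + c1*x^2/2 + c2*x^3/3 + c3*x^4/4)
      (c0 + c1*x + c2*x^2 + c3*x^3) x := by
    intro x _
    have h1 : HasDerivAt (fun x : ℝ => c0*x) c0 x := by
      simpa using (hasDerivAt_id x).const_mul c0
    have h2 := ((hasDerivAt_pow 2 x).const_mul c1).div_const 2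
    have h3 := ((hasDerivAt_pow 3 x).const_mul c2).div_const 3
    have h4 := ((hasDerivAt_pow 4 x).const_mul c3).div_const 4
    refine (((h1.add h2).add h3).add h4).congr_deriv ?_
    push_cast
    ring
  rw [intervalIntegral.integral_eq_sub_of_hasDerivAt h
    ((Continuous.intervalIntegrable (by fun_prop) 0 1))]
  ring

lemma int01 (f : ℝ → ℝ) (c0 c1 c2 c3 : ℝ) (h : ∀ x, f x = c0 + c1*x + c2*x^2 + c3*x^3) :
    ∫ x in (0:ℝ)..1, f x = c0 + c1/2 + c2/3 + c3/4 := by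
  rw [intervalIntegral.integral_congr
    (g := fun x => c0 + c1*x + c2*x^2 + c3*x^3) (fun x _ => h x), int_cubic]

lemma trap_fubini (g : ℝ → ℝ → ℝ) (hg : Continuous fun q : ℝ × ℝ => g q.1 q.2) :
    ∫ v in Trap, g (v 0) (v 1) = ∫ x in (0:ℝ)..1, ∫ y in (0:ℝ)..(x+1), g x y := by
  have hmp := volume_preserving_finTwoArrow ℝ
  have hemb := MeasurableEquiv.measurableEmbedding (MeasurableEquiv.finTwoArrow (α := ℝ))
  set S : Set (ℝ × ℝ) := {q | 0 ≤ q.1 ∧ q.1 ≤ 1 ∧ 0 ≤ q.2 ∧ q.2 ≤ q.1 + 1} with hSdef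
  have hSc : IsClosed S := by
    have : S = {q : ℝ×ℝ | 0 ≤ q.1} ∩ {q | q.1 ≤ 1} ∩ ({q | 0 ≤ q.2} ∩ {q | q.2 ≤ q.1 + 1}) := by
      ext q; simp only [hSdef, Set.mem_setOf_eq, Set.mem_inter_iff]; tauto
    rw [this]
    exact ((isClosed_le continuous_const continuous_fst).inter
        (isClosed_le continuous_fst continuous_const)).inter
      ((isClosed_le continuous_const continuous_snd).inter
        (isClosed_le continuous_snd (continuous_fst.add continuous_const)))
  have hScomp : IsCompact S := by
    refine (isCompact_Icc (a := ((0:ℝ),(0:ℝ))) (b := ((1:ℝ),(2:ℝ)))).of_isClosed_subset hSc ?_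
    rintro ⟨x, y⟩ ⟨h1, h2, h3, h4⟩
    refine ⟨⟨h1, h3⟩, ⟨h2, by dsimp at *; linarith⟩⟩
  have hSm : MeasurableSet S := hSc.measurableSet
  have hInt : IntegrableOn (fun q : ℝ×ℝ => g q.1 q.2) S := hg.continuousOn.integrableOn_compact hScomp
  have hTrap : Trap = (MeasurableEquiv.finTwoArrow (α := ℝ)) ⁻¹' S := rfl
  rw [hTrap]
  rw [show (fun v : Fin 2 → ℝ => g (v 0) (v 1)) = fun v =>
      (fun q : ℝ × ℝ => g q.1 q.2) (MeasurableEquiv.finTwoArrow v) from rfl]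
  rw [hmp.setIntegral_preimage_emb hemb (fun q => g q.1 q.2) S]
  rw [← MeasureTheory.integral_indicator hSm]
  rw [MeasureTheory.Measure.volume_eq_prod]
  rw [MeasureTheory.integral_prod _
    ((MeasureTheory.Measure.volume_eq_prod ℝ ℝ) ▸ (hInt.integrable_indicator hSm))]
  have key : ∀ x : ℝ, (∫ y, S.indicator (fun q : ℝ×ℝ => g q.1 q.2) (x, y)) =
      (Set.Icc (0:ℝ) 1).indicator (fun x => ∫ y in Set.Icc 0 (x+1), g x y) x := by
    intro x
    by_cases hx : x ∈ Set.Icc (0:ℝ) 1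
    · rw [Set.indicator_of_mem hx, ← MeasureTheory.integral_indicator measurableSet_Icc]
      congr 1
      funext y
      by_cases hy : y ∈ Set.Icc (0:ℝ) (x+1)
      · rw [Set.indicator_of_mem hy, Set.indicator_of_mem]
        exact ⟨hx.1, hx.2, hy.1, hy.2⟩
      · rw [Set.indicator_of_notMem hy, Set.indicator_of_notMem]
        intro h; exact hy ⟨h.2.2.1, h.2.2.2⟩
    · rw [Set.indicator_of_notMem hx]
      have : ∀ y : ℝ, S.indicator (fun q : ℝ×ℝ => g q.1 q.2) (x, y) = 0 := by
        intro y
        rw [Set.indicator_of_notMem]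
        intro h; exact hx ⟨h.1, h.2.1⟩
      simp only [this, integral_zero]
  simp only [key]
  rw [MeasureTheory.integral_indicator measurableSet_Icc]
  rw [intervalIntegral.integral_of_le (by norm_num : (0:ℝ) ≤ 1),
    ← MeasureTheory.integral_Icc_eq_integral_Ioc]
  refine MeasureTheory.setIntegral_congr_fun measurableSet_Icc (fun x hx => ?_)
  rw [intervalIntegral.integral_of_le (by linarith [hx.1] : (0:ℝ) ≤ x+1),
    ← MeasureTheory.integral_Icc_eq_integral_Ioc]

lemma T00 : ∫ v in Trap, (v 0) ^ (0:ℕ) * (v 1) ^ (0:ℕ) = (3/2 : ℝ) := by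
  rw [trap_fubini (fun x y => x ^ (0:ℕ) * y ^ (0:ℕ)) (by fun_prop)]
  simp only [intervalIntegral.integral_const_mul, integral_pow]
  rw [int01 _ 1 1 0 0 (fun x => by push_cast; ring)]; norm_num

lemma T10 : ∫ v in Trap, (v 0) ^ (1:ℕ) * (v 1) ^ (0:ℕ) = (5/6 : ℝ) := by
  rw [trap_fubini (fun x y => x ^ (1:ℕ) * y ^ (0:ℕ)) (by fun_prop)]
  simp only [intervalIntegral.integral_const_mul, integral_pow]
  rw [int01 _ 0 1 1 0 (fun x => by push_cast; ring)]; norm_num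

lemma T01 : ∫ v in Trap, (v 0) ^ (0:ℕ) * (v 1) ^ (1:ℕ) = (7/6 : ℝ) := by
  rw [trap_fubini (fun x y => x ^ (0:ℕ) * y ^ (1:ℕ)) (by fun_prop)]
  simp only [intervalIntegral.integral_const_mul, integral_pow]
  rw [int01 _ (1/2) 1 (1/2) 0 (fun x => by push_cast; ring)]; norm_num

lemma T20 : ∫ v in Trap, (v 0) ^ (2:ℕ) * (v 1) ^ (0:ℕ) = (7/12 : ℝ) := by
  rw [trap_fubini (fun x y => x ^ (2:ℕ) * y ^ (0:ℕ)) (by fun_prop)]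
  simp only [intervalIntegral.integral_const_mul, integral_pow]
  rw [int01 _ 0 0 1 1 (fun x => by push_cast; ring)]; norm_num

lemma T11 : ∫ v in Trap, (v 0) ^ (1:ℕ) * (v 1) ^ (1:ℕ) = (17/24 : ℝ) := by
  rw [trap_fubini (fun x y => x ^ (1:ℕ) * y ^ (1:ℕ)) (by fun_prop)]
  simp only [intervalIntegral.integral_const_mul, integral_pow]
  rw [int01 _ 0 (1/2) 1 (1/2) (fun x => by push_cast; ring)]; norm_num

lemma T02 : ∫ v in Trap, (v 0) ^ (0:ℕ) * (v 1) ^ (2:ℕ) = (5/4 : ℝ) := by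
  rw [trap_fubini (fun x y => x ^ (0:ℕ) * y ^ (2:ℕ)) (by fun_prop)]
  simp only [intervalIntegral.integral_const_mul, integral_pow]
  rw [int01 _ (1/3) 1 1 (1/3) (fun x => by push_cast; ring)]; norm_num

lemma trap_closed : IsClosed Trap := by
  have : Trap = {v : Fin 2 → ℝ | 0 ≤ v 0} ∩ {v | v 0 ≤ 1} ∩
      ({v | 0 ≤ v 1} ∩ {v | v 1 ≤ v 0 + 1}) := by
    ext v; simp only [Trap, Set.mem_setOf_eq, Set.mem_inter_iff]; tauto
  rw [this]
  exact ((isClosed_le continuous_const (continuous_apply 0)).inter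
      (isClosed_le (continuous_apply 0) continuous_const)).inter
    ((isClosed_le continuous_const (continuous_apply 1)).inter
      (isClosed_le (continuous_apply 1) ((continuous_apply 0).add continuous_const)))

lemma trap_compact : IsCompact Trap := by
  refine (isCompact_Icc (a := fun _ : Fin 2 => (0:ℝ)) (b := fun _ => 2)).of_isClosed_subset
    trap_closed ?_
  rintro v ⟨h1, h2, h3, h4⟩
  constructor <;> intro i <;> fin_cases i <;> simp <;> linarith

theorem stmt_17 (p : MvPolynomial (Fin 2) ℝ) (hp : p.totalDegree ≤ 2) :
    let a : ℝ := 11/18 - Real.sqrt 3893 / 458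
    let b : ℝ := 1/2 + 11 * Real.sqrt 3893 / 4122
    let c : ℝ := 1 - 10 * Real.sqrt 3893 / 2061
    let d : ℝ := 11/18 + Real.sqrt 3893 / 458
    let l : ℝ := 163/392
    l * (3/2) * eval ![5/9, 7/9] p
        + (1 - l) * (3/8) *
          (eval ![a, 0] p + eval ![1, c] p + eval ![0, b] p + eval ![d, d + 1] p)
      = ∫ v in Trap, eval v p := by
  intro a b c d l
  have ha : a = 11/18 - Real.sqrt 3893 / 458 := rfl
  have hb : b = 1/2 + 11 * Real.sqrt 3893 / 4122 := rfl
  have hc : c = 1 - 10 * Real.sqrt 3893 / 2061 := rfl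
  have hd : d = 11/18 + Real.sqrt 3893 / 458 := rfl
  have hl : l = 163/392 := rfl
  have hs : Real.sqrt 3893 ^ 2 = 3893 := Real.sq_sqrt (by norm_num)
  simp only [eval_eq', Fin.prod_univ_two, Matrix.cons_val_zero, Matrix.cons_val_one,
    Matrix.head_cons]
  rw [MeasureTheory.integral_finset_sum _ (fun m _ => by
    exact ContinuousOn.integrableOn_compact trap_compact (Continuous.continuousOn (by fun_prop)))]
  simp only [mul_add, Finset.mul_sum, ← Finset.sum_add_distrib]
  refine Finset.sum_congr rfl (fun m hm => ?_)
  rw [MeasureTheory.integral_const_mul]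
  have hm2 : m 0 + m 1 ≤ 2 := by
    have h1 := (MvPolynomial.le_totalDegree hm).trans hp
    rwa [show (m.sum fun _ e => e) = m 0 + m 1 by
      rw [Finsupp.sum_fintype _ _ (fun _ => rfl), Fin.sum_univ_two]] at h1
  have hcases : (m 0 = 0 ∧ m 1 = 0) ∨ (m 0 = 1 ∧ m 1 = 0) ∨ (m 0 = 0 ∧ m 1 = 1) ∨
      (m 0 = 2 ∧ m 1 = 0) ∨ (m 0 = 1 ∧ m 1 = 1) ∨ (m 0 = 0 ∧ m 1 = 2) := by omega
  rcases hcases with ⟨e0, e1⟩ | ⟨e0, e1⟩ | ⟨e0, e1⟩ | ⟨e0, e1⟩ | ⟨e0, e1⟩ | ⟨e0, e1⟩ <;>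
      rw [e0, e1] <;> rw [ha, hb, hc, hd, hl]
  · rw [T00]; ring
  · rw [T10]; ring
  · rw [T01]; ring
  · rw [T20]; linear_combination (MvPolynomial.coeff m p * (3/1436288 : ℝ)) * hs
  · rw [T11]; linear_combination (MvPolynomial.coeff m p * (3/2872576 : ℝ)) * hs
  · rw [T02]; linear_combination (MvPolynomial.coeff m p * (43/5539968 : ℝ)) * hs
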